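/- Let α be a strictly positive allocation (α_{i,j} > 0 for all 1 ≤ i ≤ K, 1 ≤ j ≤ D). For each fixed 1 ≤ j ≤ D, the identity Σ_{i ≠ b} [ (∂G_i/∂α_{b,j}(α_b, α_i)) / (∂G_i/∂α_{i,j}(α_b, α_i)) ] = 1 holds if and only if (α_{b,j}/σ_{b,j})² = Σ_{i ≠ b} (α_{i,j}/σ_{i,j})². -/

import Mathlib

open Finset
set_option maxHeartbeats 1000000

lemma deriv_aux (C c B t0 : ℝ) (hc : 0 < c) (ht : 0 < t0) (hB : 0 ≤ B) :
    deriv (fun t : ℝ => C / (2 * (c / t + B))) t0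
      = 2 * C * c / (t0 ^ 2 * (2 * (c / t0 + B)) ^ 2) := by
  have hne : (2 : ℝ) * (c / t0 + B) ≠ 0 := by positivity
  have h1 : HasDerivAt (fun t : ℝ => 2 * (c / t + B)) (2 * (c * (-(t0 ^ 2)⁻¹))) t0 := by
    have := (((hasDerivAt_inv ht.ne').const_mul c).add_const B).const_mul 2
    simpa [div_eq_mul_inv] using this
  have h2 := (hasDerivAt_const t0 C).div h1 hne
  rw [HasDerivAt.deriv (f := fun t : ℝ => C / (2 * (c / t + B))) h2]
  field_simp
  ring

theorem stmt_11
    {K D : ℕ} (hK : 2 ≤ K) (hD : 1 ≤ D)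
    (b : Fin K)
    (μ : Fin K → Fin D → ℝ)
    (σ : Fin K → Fin D → ℝ) (hσ : ∀ i j, 0 < σ i j)
    (w : Fin D → ℝ) (hw : ∀ j, 0 < w j) (hw1 : ∑ j, w j = 1)
    (μbar : Fin K → ℝ) (hμbar : ∀ i, μbar i = ∑ j, w j * μ i j)
    (hbest : ∀ i, i ≠ b → μbar i < μbar b)
    (G : Fin K → (Fin K → Fin D → ℝ) → ℝ)
    (hG : ∀ i α, G i α = (μbar b - μbar i) ^ 2 /
        (2 * (∑ j, (σ b j) ^ 2 * (w j) ^ 2 / α b j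
            + ∑ j, (σ i j) ^ 2 * (w j) ^ 2 / α i j)))
    (α : Fin K → Fin D → ℝ) (hα : ∀ i j, 0 < α i j) :
    ∀ j : Fin D,
      ((∑ i ∈ univ.erase b,
          (deriv (fun t => G i (Function.update α b (Function.update (α b) j t))) (α b j)) /
          (deriv (fun t => G i (Function.update α i (Function.update (α i) j t))) (α i j))) = 1
        ↔ (α b j / σ b j) ^ 2 = ∑ i ∈ univ.erase b, (α i j / σ i j) ^ 2) := by
  intro j
  have hsum_split : ∀ k : Fin K, ∀ x : ℝ,
      (∑ j', (σ k j') ^ 2 * (w j') ^ 2 / Function.update (α k) j x j')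
      = (σ k j) ^ 2 * (w j) ^ 2 / x
        + ∑ j' ∈ univ.erase j, (σ k j') ^ 2 * (w j') ^ 2 / α k j' := by
    intro k x
    rw [← Finset.sum_erase_add _ _ (Finset.mem_univ j), Function.update_self, add_comm]
    congr 1
    exact Finset.sum_congr rfl fun j' hj' =>
      by rw [Function.update_of_ne (Finset.ne_of_mem_erase hj')]
  have key : ∀ i ∈ univ.erase b,
      (deriv (fun t => G i (Function.update α b (Function.update (α b) j t))) (α b j)) /
      (deriv (fun t => G i (Function.update α i (Function.update (α i) j t))) (α i j))
      = (α i j / σ i j) ^ 2 / (α b j / σ b j) ^ 2 := by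
    intro i hi
    have hib : i ≠ b := Finset.ne_of_mem_erase hi
    set C : ℝ := (μbar b - μbar i) ^ 2 with hC
    have hCpos : 0 < C := pow_pos (sub_pos.mpr (hbest i hib)) 2
    set cb : ℝ := (σ b j) ^ 2 * (w j) ^ 2 with hcbdef
    set ci : ℝ := (σ i j) ^ 2 * (w j) ^ 2 with hcidef
    have hcb : 0 < cb := by have := hσ b j; have := hw j; positivity
    have hci : 0 < ci := by have := hσ i j; have := hw j; positivity
    set Rb : ℝ := ∑ j' ∈ univ.erase j, (σ b j') ^ 2 * (w j') ^ 2 / α b j' with hRb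
    set Ri : ℝ := ∑ j' ∈ univ.erase j, (σ i j') ^ 2 * (w j') ^ 2 / α i j' with hRi
    set Sb : ℝ := ∑ j', (σ b j') ^ 2 * (w j') ^ 2 / α b j' with hSb
    set Si : ℝ := ∑ j', (σ i j') ^ 2 * (w j') ^ 2 / α i j' with hSi
    have hRbpos : 0 ≤ Rb := Finset.sum_nonneg fun j' _ => by
      have := hα b j'; positivity
    have hRipos : 0 ≤ Ri := Finset.sum_nonneg fun j' _ => by
      have := hα i j'; positivity
    have hSbeq : Sb = cb / α b j + Rb := by
      rw [hSb, ← Finset.sum_erase_add _ _ (Finset.mem_univ j), add_comm]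
    have hSieq : Si = ci / α i j + Ri := by
      rw [hSi, ← Finset.sum_erase_add _ _ (Finset.mem_univ j), add_comm]
    have hfb : (fun t => G i (Function.update α b (Function.update (α b) j t)))
        = fun t => C / (2 * (cb / t + (Rb + Si))) := by
      funext t
      rw [hG]
      have h1 : Function.update α b (Function.update (α b) j t) b
          = Function.update (α b) j t := Function.update_self _ _ _
      have h2 : Function.update α b (Function.update (α b) j t) i = α i :=
        Function.update_of_ne hib _ _
      rw [h1, h2, hsum_split b t, hC, hcbdef, hRb, hSi]
      ring
    have hfi : (fun t => G i (Function.update α i (Function.update (α i) j t)))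
        = fun t => C / (2 * (ci / t + (Ri + Sb))) := by
      funext t
      rw [hG]
      have h1 : Function.update α i (Function.update (α i) j t) i
          = Function.update (α i) j t := Function.update_self _ _ _
      have h2 : Function.update α i (Function.update (α i) j t) b = α b :=
        Function.update_of_ne (Ne.symm hib) _ _
      rw [h1, h2, hsum_split i t, hC, hcidef, hRi, hSb]
      ring
    have hSipos : 0 ≤ Si := by rw [hSieq]; have := hα i j; positivity
    have hSbpos : 0 ≤ Sb := by rw [hSbeq]; have := hα b j; positivity
    rw [hfb, hfi, deriv_aux C cb (Rb + Si) (α b j) hcb (hα b j) (by linarith),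
      deriv_aux C ci (Ri + Sb) (α i j) hci (hα i j) (by linarith)]
    have hS : cb / α b j + (Rb + Si) = Sb + Si := by rw [hSbeq]; ring
    have hS' : ci / α i j + (Ri + Sb) = Sb + Si := by rw [hSieq]; ring
    rw [hS, hS']
    have hSpos : 0 < Sb + Si := by
      rw [hSbeq]
      have h1 : 0 < cb / α b j := by have := hα b j; positivity
      linarith
    have h2S : (2 * (Sb + Si)) ≠ 0 := by positivity
    rw [hcbdef, hcidef]
    have hαb := hα b j; have hαi := hα i j
    have hσb := hσ b j; have hσi := hσ i j; have hwj := hw j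
    field_simp
  rw [Finset.sum_congr rfl key, ← Finset.sum_div]
  have hpos : (0:ℝ) < (α b j / σ b j) ^ 2 := by
    have := hα b j; have := hσ b j; positivity
  rw [div_eq_one_iff_eq hpos.ne']
  exact ⟨fun h => h.symm, fun h => h.symm⟩
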